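/- For any probability measure μ on the unit circle 𝕋 ⊂ ℂ, the limit as n → ∞ of (1/2^{2n})·∑_{k=1}^n binom(2n, n−k)·∫_𝕋 (z^k + conj(z)^k) dμ(z) equals μ({1}). -/

import Mathlib

open MeasureTheory Finset Filter

lemma cb_sq_le (n : ℕ) : (2*n+1) * (Nat.centralBinom n)^2 ≤ 16^n := by
  induction n with
  | zero => simp [Nat.centralBinom]
  | succ n ih =>
    have h := Nat.succ_mul_centralBinom_succ n
    have key : (n+1)^2 * ((2*(n+1)+1) * (Nat.centralBinom (n+1))^2)
        ≤ (n+1)^2 * 16^(n+1) := by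
      have e1 : (n+1)^2 * ((2*(n+1)+1) * (Nat.centralBinom (n+1))^2)
          = (2*n+3) * ((n+1) * Nat.centralBinom (n+1))^2 := by ring
      rw [e1, h]
      have e2 : (2*n+3) * (2 * (2*n+1) * Nat.centralBinom n)^2
          = ((2*n+3)*(2*n+1)*4) * ((2*n+1) * (Nat.centralBinom n)^2) := by ring
      rw [e2]
      calc ((2*n+3)*(2*n+1)*4) * ((2*n+1) * (Nat.centralBinom n)^2)
          ≤ ((2*n+3)*(2*n+1)*4) * 16^n := by
            exact Nat.mul_le_mul_left _ ih
        _ ≤ ((n+1)^2 * 16) * 16^n := by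
            apply Nat.mul_le_mul_right
            nlinarith
        _ = (n+1)^2 * 16^(n+1) := by ring
    exact Nat.le_of_mul_le_mul_left key (by positivity)

lemma cb_le (n : ℕ) : (Nat.centralBinom n : ℝ) / 4^n ≤ Real.sqrt (1/(2*n+1)) := by
  have h0 : (0:ℝ) < 4^n := by positivity
  rw [Real.le_sqrt (by positivity) (by positivity)]
  have := cb_sq_le n
  have h : ((2*n+1) * (Nat.centralBinom n)^2 : ℝ) ≤ 16^n := by exact_mod_cast this
  rw [div_pow]
  rw [div_le_div_iff₀ (by positivity) (by positivity)]
  have h16 : ((4:ℝ)^n)^2 = 16^n := by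
    rw [← pow_mul, mul_comm, pow_mul]; norm_num
  push_cast at h ⊢
  nlinarith [h, h16]

lemma cb_tendsto : Tendsto (fun n : ℕ => (Nat.centralBinom n : ℝ) / 4^n) atTop (nhds 0) := by
  have h1 : Tendsto (fun n : ℕ => (1:ℝ)/(2*n+1)) atTop (nhds 0) := by
    have hb : Tendsto (fun n : ℕ => (2*(n:ℝ)+1)) atTop atTop := by
      apply tendsto_atTop_add_const_right
      exact (tendsto_natCast_atTop_atTop).const_mul_atTop (by norm_num)
    simpa [one_div, Function.comp_def] using tendsto_inv_atTop_zero.comp hb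
  have h2 : Tendsto (fun n : ℕ => Real.sqrt (1/(2*n+1))) atTop (nhds 0) := by
    have := (Real.continuous_sqrt.tendsto 0).comp h1
    simpa only [Function.comp_def, Real.sqrt_zero] using this
  refine tendsto_of_tendsto_of_tendsto_of_le_of_le tendsto_const_nhds h2 ?_ cb_le
  intro n; positivity

lemma key (n : ℕ) (z : ℂ) (hz : z ≠ 0) :
    z^n * ∑ k ∈ Icc 1 n, (Nat.choose (2*n) (n-k) : ℂ) * (z^k + (z⁻¹)^k)
      = (1+z)^(2*n) - (Nat.choose (2*n) n : ℂ) * z^n := by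
  have e1 : ∀ k ∈ Icc 1 n, z^n * ((Nat.choose (2*n) (n-k) : ℂ) * (z^k + (z⁻¹)^k))
      = (Nat.choose (2*n) (n-k):ℂ) * z^(n+k) + (Nat.choose (2*n) (n-k):ℂ) * z^(n-k) := by
    intro k hk
    obtain ⟨hk1, hk2⟩ := mem_Icc.mp hk
    have hzk : z^(n-k) * z^k = z^n := by
      rw [← pow_add]; congr 1; omega
    have h2 : z^n * (z⁻¹)^k = z^(n-k) := by
      rw [inv_pow, ← hzk, mul_assoc, mul_inv_cancel₀ (pow_ne_zero k hz), mul_one]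
    have h3 : z^k * z^n = z^(n+k) := by rw [← pow_add]; congr 1; omega
    have h4 : z^n * ((Nat.choose (2*n) (n-k):ℂ) * (z^k + (z⁻¹)^k))
        = (Nat.choose (2*n) (n-k):ℂ) * (z^k*z^n + z^n*(z⁻¹)^k) := by ring
    rw [h4, h3, h2, mul_add]
  rw [Finset.mul_sum, Finset.sum_congr rfl e1, Finset.sum_add_distrib]
  have hIcc : Icc 1 n = Ico 1 (n+1) := (Finset.Ico_add_one_right_eq_Icc 1 n).symm
  -- second sum: ∑_{k∈Icc 1 n} C(2n,n-k) z^{n-k} = ∑_{j∈range n} C(2n,j) z^j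
  have eB : ∑ k ∈ Icc 1 n, (Nat.choose (2*n) (n-k):ℂ) * z^(n-k)
      = ∑ j ∈ range n, (Nat.choose (2*n) j : ℂ) * z^j := by
    rw [hIcc, Finset.sum_Ico_eq_sum_range, ← Finset.sum_range_reflect]
    apply Finset.sum_congr rfl
    intro i hi
    have hi' := mem_range.mp hi
    rw [show n - (1 + (n+1-1-1-i)) = i by omega]
  -- first sum: ∑_{k∈Icc 1 n} C(2n,n-k) z^{n+k} = ∑_{j∈Ico (n+1) (2n+1)} C(2n,j) z^j
  have eA : ∑ k ∈ Icc 1 n, (Nat.choose (2*n) (n-k):ℂ) * z^(n+k)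
      = ∑ j ∈ Ico (n+1) (2*n+1), (Nat.choose (2*n) j : ℂ) * z^j := by
    rw [hIcc, Finset.sum_Ico_eq_sum_range, Finset.sum_Ico_eq_sum_range]
    have h2n : 2*n+1 - (n+1) = n := by omega
    rw [h2n]
    apply Finset.sum_congr rfl
    intro i hi
    have hi' := mem_range.mp hi
    have hc : Nat.choose (2*n) (n - (1+i)) = Nat.choose (2*n) (n+1+i) := by
      rw [← Nat.choose_symm (by omega : n+1+i ≤ 2*n)]
      congr 1; omega
    rw [hc]
    congr 2
    omega
  rw [eA, eB]
  have hbin : (1+z)^(2*n) = ∑ j ∈ range (2*n+1), (Nat.choose (2*n) j : ℂ) * z^j := by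
    rw [add_comm, add_pow]
    apply Finset.sum_congr rfl
    intro j _
    rw [one_pow, mul_one, mul_comm]
  rw [hbin, Finset.range_eq_Ico (2*n+1),
    ← Finset.sum_Ico_consecutive _ (Nat.zero_le n) (by omega : n ≤ 2*n+1),
    Finset.sum_eq_sum_Ico_succ_bot (by omega : n < 2*n+1)]
  rw [← Finset.range_eq_Ico]
  push_cast
  ring

lemma cb_le_four_pow (n : ℕ) : Nat.centralBinom n ≤ 4^n := by
  have h := cb_sq_le n
  have h2 : (Nat.centralBinom n)^2 ≤ (4^n)^2 := by
    calc (Nat.centralBinom n)^2 ≤ (2*n+1) * (Nat.centralBinom n)^2 := Nat.le_mul_of_pos_left _ (by omega)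
      _ ≤ 16^n := h
      _ = (4^n)^2 := by rw [← pow_mul, mul_comm, pow_mul]; norm_num
  exact Nat.pow_le_pow_iff_left (by norm_num) |>.mp h2

lemma c_tendsto : Tendsto (fun n : ℕ => (Nat.choose (2*n) n : ℂ)/4^n) atTop (nhds 0) := by
  have := (Complex.continuous_ofReal.tendsto 0).comp cb_tendsto
  simp only [Function.comp_def, Complex.ofReal_zero] at this
  refine this.congr fun n => ?_
  rw [Nat.centralBinom] at *
  push_cast
  ring

lemma abs_w {z : ℂ} (hz : ‖z‖ = 1) :
    ‖(1+z)^2 / (4*z)‖ = (1 + z.re)/2 := by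
  have hn : Complex.normSq z = 1 := by
    have := Complex.sq_norm z; rw [hz] at this; simpa using this.symm
  have hre : z.re^2 + z.im^2 = 1 := by
    have := Complex.normSq_apply z; rw [hn] at this; nlinarith [this]
  rw [norm_div, norm_pow, norm_mul, hz]
  have h1 : (‖1+z‖)^2 = Complex.normSq (1+z) := Complex.sq_norm _
  have h2 : Complex.normSq (1+z) = (1+z.re)^2 + z.im^2 := by
    rw [Complex.normSq_apply]; simp; ring
  have : (‖1+z‖)^2 = 2 + 2*z.re := by rw [h1, h2]; nlinarith [hre]
  rw [this]
  simp [Complex.norm_ofNat]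
  ring

theorem stmt1 (μ : Measure ℂ) [IsProbabilityMeasure μ]
    (hμ : ∀ᵐ z ∂μ, ‖z‖ = 1) :
    Tendsto (fun n : ℕ =>
      (1 / 2 ^ (2 * n) : ℂ) * ∑ k ∈ Finset.Icc 1 n, (Nat.choose (2 * n) (n - k) : ℂ) *
        ∫ z, (z ^ k + (starRingEnd ℂ) z ^ k) ∂μ)
      atTop (nhds ((μ {1}).toReal : ℂ)) := by
  set F : ℕ → ℂ → ℂ := fun n z =>
    (1 / 2 ^ (2 * n) : ℂ) * ∑ k ∈ Finset.Icc 1 n, (Nat.choose (2 * n) (n - k) : ℂ) *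
      (z ^ k + (starRingEnd ℂ) z ^ k) with hFdef
  set flim : ℂ → ℂ := Set.indicator ({1} : Set ℂ) (fun _ => (1:ℂ)) with hflim
  have hcont : ∀ n, Continuous (F n) := by
    intro n
    apply Continuous.mul continuous_const
    apply continuous_finset_sum
    intro k _
    exact Continuous.mul continuous_const ((continuous_pow k).add ((Complex.continuous_conj).pow k))
  have hintk : ∀ (c : ℂ) (k : ℕ),
      Integrable (fun z : ℂ => c * (z ^ k + (starRingEnd ℂ) z ^ k)) μ := by
    intro c k
    refine ⟨(continuous_const.mul ((continuous_pow k).add (Complex.continuous_conj.pow k))).aestronglyMeasurable, HasFiniteIntegral.of_bounded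
      (C := ‖c‖ * 2) ?_⟩
    filter_upwards [hμ] with z hz
    rw [norm_mul]
    apply mul_le_mul_of_nonneg_left _ (norm_nonneg c)
    calc ‖z ^ k + (starRingEnd ℂ) z ^ k‖ ≤ ‖z ^ k‖ + ‖(starRingEnd ℂ) z ^ k‖ := norm_add_le _ _
      _ ≤ 2 := by
          rw [norm_pow, norm_pow, RCLike.norm_conj, hz]
          norm_num
  have hswap : ∀ n, (1 / 2 ^ (2 * n) : ℂ) * ∑ k ∈ Finset.Icc 1 n,
      (Nat.choose (2 * n) (n - k) : ℂ) * ∫ z, (z ^ k + (starRingEnd ℂ) z ^ k) ∂μ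
      = ∫ z, F n z ∂μ := by
    intro n
    rw [hFdef]
    simp only
    rw [integral_const_mul, integral_finset_sum _ (fun k _ => hintk _ k)]
    congr 1
    refine Finset.sum_congr rfl fun k _ => ?_
    rw [integral_const_mul]
  have hform : ∀ z : ℂ, ‖z‖ = 1 → ∀ n,
      F n z = ((1+z)^2/(4*z))^n - (Nat.choose (2*n) n : ℂ)/4^n := by
    intro z hz n
    have hz0 : z ≠ 0 := by intro h; rw [h] at hz; simp at hz
    have hnormSq : Complex.normSq z = 1 := by
      rw [← Complex.sq_norm, hz]; norm_num
    have hconj : (starRingEnd ℂ) z = z⁻¹ := by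
      rw [Complex.inv_def, hnormSq]; simp
    have hzn : z^n ≠ 0 := pow_ne_zero _ hz0
    have hk := key n z hz0
    have hS : ∑ k ∈ Finset.Icc 1 n, (Nat.choose (2*n) (n-k) : ℂ) * (z^k + (z⁻¹)^k)
        = ((1+z)^(2*n) - (Nat.choose (2*n) n : ℂ)*z^n)/z^n := by
      rw [eq_div_iff hzn, mul_comm]
      exact hk
    have hw : ((1+z)^2/(4*z))^n = (1+z)^(2*n)/(4^n * z^n) := by
      rw [div_pow, mul_pow, ← pow_mul]
    have h4 : ((2:ℂ))^(2*n) = 4^n := by rw [pow_mul]; norm_num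
    simp only [hFdef, hconj]
    rw [hS, hw, h4]
    have h4n : ((4:ℂ))^n ≠ 0 := pow_ne_zero _ (by norm_num)
    field_simp
  have hbound : ∀ n, ∀ᵐ z ∂μ, ‖F n z‖ ≤ 2 := by
    intro n
    filter_upwards [hμ] with z hz
    rw [hform z hz n]
    have hre : z.re ≤ 1 := by rw [← hz]; exact Complex.re_le_norm z
    have hre2 : -1 ≤ z.re := by
      have := Complex.abs_re_le_norm z; rw [hz] at this
      have := abs_le.mp this; linarith [this.1]
    calc ‖((1+z)^2/(4*z))^n - (Nat.choose (2*n) n : ℂ)/4^n‖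
        ≤ ‖((1+z)^2/(4*z))^n‖ + ‖(Nat.choose (2*n) n : ℂ)/4^n‖ := norm_sub_le _ _
      _ ≤ 1 + 1 := by
          apply add_le_add
          · rw [norm_pow, abs_w hz]
            apply pow_le_one₀ (by linarith) (by linarith)
          · have hcast : ((Nat.choose (2*n) n : ℂ)/4^n)
                = (((Nat.choose (2*n) n : ℝ)/4^n : ℝ) : ℂ) := by push_cast; ring
            rw [hcast, Complex.norm_real, Real.norm_eq_abs, abs_of_nonneg (by positivity),
              div_le_one (by positivity)]
            have := cb_le_four_pow n
            rw [Nat.centralBinom] at this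
            exact_mod_cast this
      _ = 2 := by norm_num
  have hlimz : ∀ᵐ z ∂μ, Tendsto (fun n => F n z) atTop (nhds (flim z)) := by
    filter_upwards [hμ] with z hz
    apply Tendsto.congr (fun n => (hform z hz n).symm)
    by_cases h1 : z = 1
    · subst h1
      have hw1 : ((1+(1:ℂ))^2/(4*1)) = 1 := by norm_num
      rw [hw1]
      have hfl : flim 1 = 1 := by simp [hflim]
      rw [hfl]
      have := tendsto_const_nhds (x := (1:ℂ)) (f := atTop (α := ℕ)) |>.sub c_tendsto
      simpa using this
    · have hfl : flim z = 0 := by simp [hflim, h1]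
      rw [hfl]
      have hre : z.re < 1 := by
        have hle : z.re ≤ 1 := by rw [← hz]; exact Complex.re_le_norm z
        rcases lt_or_eq_of_le hle with h | h
        · exact h
        · exfalso
          apply h1
          have hnormSq : Complex.normSq z = 1 := by rw [← Complex.sq_norm, hz]; norm_num
          have him : z.im = 0 := by
            have := Complex.normSq_apply z
            nlinarith [this, hnormSq]
          exact Complex.ext (by simpa using h) (by simpa using him)
      have hwlt : ‖(1+z)^2/(4*z)‖ < 1 := by
        rw [abs_w hz]; linarith
      have := (tendsto_pow_atTop_nhds_zero_of_norm_lt_one hwlt).sub c_tendsto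
      simpa using this
  have hDCT := MeasureTheory.tendsto_integral_of_dominated_convergence (F := F)
    (bound := fun _ => (2:ℝ)) (fun n => (hcont n).aestronglyMeasurable)
    (integrable_const 2) hbound hlimz
  have hflimint : ∫ z, flim z ∂μ = ((μ {1}).toReal : ℂ) := by
    rw [hflim, MeasureTheory.integral_indicator_const (1:ℂ) (measurableSet_singleton 1)]
    rw [Complex.real_smul, mul_one, Measure.real]
  rw [hflimint] at hDCT
  exact hDCT.congr (fun n => (hswap n).symm)
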